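/- The set D̂* of marked distance matrices (r,v) ∈ D̂ (r a pseudometric on ℕ, v : ℕ → ℝ≥0) such that the empirical measures mⁿ = n⁻¹Σ_{i=1}ⁿ δ_{(i,v(i))} on the completion X of (ℕ,r) times ℝ≥0 converge weakly, is a Borel measurable subset of D̂. -/

import Mathlib

open MeasureTheory
open scoped ENNReal
open scoped Classical

/-- The Prohorov distance of two measures with respect to a distance function `d`. -/
noncomputable def prohorovDist {α : Type*} [MeasurableSpace α]
    (d : α → α → ℝ) (μ ν : Measure α) : ℝ :=
  sInf {ε : ℝ | 0 < ε ∧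
    (∀ F : Set α, μ F ≤ ν {y | ∃ x ∈ F, d x y < ε} + ENNReal.ofReal ε) ∧
    (∀ F : Set α, ν F ≤ μ {y | ∃ x ∈ F, d x y < ε} + ENNReal.ofReal ε)}

/-- The `n`-th empirical measure `n⁻¹ ∑_{i<n} δ_{(i,v(i))}` on `ℕ × ℝ`. -/
noncomputable def empMeas (v : ℕ → ℝ) (n : ℕ) : Measure (ℕ × ℝ) :=
  ((n : ℝ≥0∞))⁻¹ • ∑ i ∈ Finset.range n, Measure.dirac ((i, v i) : ℕ × ℝ)

namespace Stmt13Aux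

def PS {α : Type*} [MeasurableSpace α] (d : α → α → ℝ) (μ ν : Measure α) : Set ℝ :=
  {ε : ℝ | 0 < ε ∧
    (∀ F : Set α, μ F ≤ ν {y | ∃ x ∈ F, d x y < ε} + ENNReal.ofReal ε) ∧
    (∀ F : Set α, ν F ≤ μ {y | ∃ x ∈ F, d x y < ε} + ENNReal.ofReal ε)}

variable {α : Type*} [MeasurableSpace α] {d : α → α → ℝ} {μ ν : Measure α}

lemma PS_upward {ε ε' : ℝ} (h : ε ∈ PS d μ ν) (hle : ε ≤ ε') : ε' ∈ PS d μ ν := by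
  obtain ⟨hpos, h1, h2⟩ := h
  have key : ∀ (κ ρ : Measure α), (∀ F : Set α, κ F ≤ ρ {y | ∃ x ∈ F, d x y < ε} + ENNReal.ofReal ε) →
      ∀ F : Set α, κ F ≤ ρ {y | ∃ x ∈ F, d x y < ε'} + ENNReal.ofReal ε' := by
    intro κ ρ h F
    refine (h F).trans (add_le_add ?_ (ENNReal.ofReal_le_ofReal hle))
    exact measure_mono fun y ⟨x, hx, hd⟩ => ⟨x, hx, lt_of_lt_of_le hd hle⟩
  exact ⟨lt_of_lt_of_le hpos hle, key μ ν h1, key ν μ h2⟩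

lemma two_mem_PS (hμ : μ Set.univ ≤ 1) (hν : ν Set.univ ≤ 1) : (2 : ℝ) ∈ PS d μ ν := by
  refine ⟨by norm_num, ?_, ?_⟩ <;> intro F
  · calc μ F ≤ μ Set.univ := measure_mono (Set.subset_univ F)
      _ ≤ 1 := hμ
      _ ≤ ENNReal.ofReal 2 := by norm_num
      _ ≤ _ := le_add_self
  · calc ν F ≤ ν Set.univ := measure_mono (Set.subset_univ F)
      _ ≤ 1 := hν
      _ ≤ ENNReal.ofReal 2 := by norm_num
      _ ≤ _ := le_add_self

lemma PS_bddBelow : BddBelow (PS d μ ν) := ⟨0, fun x hx => hx.1.le⟩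

lemma prohorovDist_le_iff (hμ : μ Set.univ ≤ 1) (hν : ν Set.univ ≤ 1) (c : ℝ) :
    prohorovDist d μ ν ≤ c ↔ ∀ q : ℚ, c < (q : ℝ) → (q : ℝ) ∈ PS d μ ν := by
  have hne : (PS d μ ν).Nonempty := ⟨2, two_mem_PS hμ hν⟩
  constructor
  · intro h q hq
    have : sInf (PS d μ ν) < (q : ℝ) := lt_of_le_of_lt h hq
    obtain ⟨ε, hε, hεq⟩ := exists_lt_of_csInf_lt hne this
    exact PS_upward hε hεq.le
  · intro h
    by_contra hc
    push_neg at hc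
    have hc' : c < prohorovDist d μ ν := hc
    obtain ⟨q, hq1, hq2⟩ := exists_rat_btwn hc'
    exact absurd (csInf_le PS_bddBelow (h q hq1)) (not_le.mpr hq2)

end Stmt13Aux

lemma empMeas_apply (v : ℕ → ℝ) (n : ℕ) (s : Set (ℕ × ℝ)) :
    empMeas v n s = ((n : ℝ≥0∞))⁻¹ * ∑ i ∈ Finset.range n, (if (i, v i) ∈ s then 1 else 0) := by
  simp [empMeas, Measure.smul_apply, Measure.coe_finset_sum, Finset.sum_apply,
    Measure.dirac_apply, Set.indicator_apply, smul_eq_mul]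

lemma empMeas_univ_le (v : ℕ → ℝ) (n : ℕ) : empMeas v n Set.univ ≤ 1 := by
  rw [empMeas_apply]
  simp only [Set.mem_univ, if_pos, Finset.sum_const, Finset.card_range, nsmul_eq_mul, mul_one]
  exact ENNReal.inv_mul_le_one _


lemma reduce_forall (d : ℕ × ℝ → ℕ × ℝ → ℝ) (v : ℕ → ℝ) (m n : ℕ) (ε : ℝ) :
    (∀ F : Set (ℕ × ℝ), empMeas v m F ≤ empMeas v n {y | ∃ x ∈ F, d x y < ε} + ENNReal.ofReal ε)
    ↔ (∀ s ∈ (Finset.range m).powerset,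
        empMeas v m ((fun i => (i, v i)) '' (s : Set ℕ)) ≤
          empMeas v n {y | ∃ x ∈ (fun i => (i, v i)) '' (s : Set ℕ), d x y < ε}
            + ENNReal.ofReal ε) := by
  constructor
  · intro h s _; exact h _
  · intro h F
    classical
    set s : Finset ℕ := (Finset.range m).filter (fun i => (i, v i) ∈ F) with hs
    have hsub : s ∈ (Finset.range m).powerset := Finset.mem_powerset.mpr (Finset.filter_subset _ _)
    have himg : (fun i => (i, v i)) '' (s : Set ℕ) ⊆ F := by
      rintro p ⟨i, hi, rfl⟩
      simp only [hs, Finset.coe_filter, Set.mem_setOf_eq] at hi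
      exact hi.2
    have heq : empMeas v m F = empMeas v m ((fun i => (i, v i)) '' (s : Set ℕ)) := by
      rw [empMeas_apply, empMeas_apply]
      congr 1
      refine Finset.sum_congr rfl fun j hj => ?_
      refine if_congr ?_ rfl rfl
      constructor
      · intro hF
        exact ⟨j, by simp [hs, Finset.mem_filter, hF, Finset.mem_range.mp hj], rfl⟩
      · rintro ⟨i, hi, hij⟩
        simp only [hs, Finset.coe_filter, Set.mem_setOf_eq] at hi
        rw [← hij]; exact hi.2
    rw [heq]
    refine (h s hsub).trans (add_le_add ?_ le_rfl)
    exact measure_mono fun y ⟨x, hx, hd⟩ => ⟨x, himg hx, hd⟩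

lemma mem_img_iff (v : ℕ → ℝ) (s : Finset ℕ) (j : ℕ) :
    ((j, v j) ∈ (fun i => (i, v i)) '' (s : Set ℕ)) ↔ j ∈ s := by
  constructor
  · rintro ⟨i, hi, h⟩
    obtain ⟨h1, -⟩ := Prod.mk.injEq .. ▸ h
    exact h1 ▸ hi
  · intro hj; exact ⟨j, hj, rfl⟩

lemma hr_meas (i j : ℕ) : Measurable fun rv : (ℕ → ℕ → ℝ) × (ℕ → ℝ) => rv.1 i j :=
  (measurable_pi_apply j).comp ((measurable_pi_apply i).comp measurable_fst)

lemma hv_meas (i : ℕ) : Measurable fun rv : (ℕ → ℕ → ℝ) × (ℕ → ℝ) => rv.2 i :=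
  (measurable_pi_apply i).comp measurable_snd

lemma meas_one_side (m n : ℕ) (q : ℝ) :
    MeasurableSet {rv : (ℕ → ℕ → ℝ) × (ℕ → ℝ) | ∀ F : Set (ℕ × ℝ),
      empMeas rv.2 m F ≤
        empMeas rv.2 n {y | ∃ x ∈ F, max (rv.1 x.1 y.1) |x.2 - y.2| < q}
          + ENNReal.ofReal q} := by
  have hset : {rv : (ℕ → ℕ → ℝ) × (ℕ → ℝ) | ∀ F : Set (ℕ × ℝ),
      empMeas rv.2 m F ≤
        empMeas rv.2 n {y | ∃ x ∈ F, max (rv.1 x.1 y.1) |x.2 - y.2| < q}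
          + ENNReal.ofReal q} =
      ⋂ s ∈ (Finset.range m).powerset, {rv : (ℕ → ℕ → ℝ) × (ℕ → ℝ) |
        ((m : ℝ≥0∞))⁻¹ * (s.card : ℝ≥0∞) ≤
          ((n : ℝ≥0∞))⁻¹ * ∑ j ∈ Finset.range n,
            (if (∃ i ∈ s, max (rv.1 i j) |rv.2 i - rv.2 j| < q) then 1 else 0)
          + ENNReal.ofReal q} := by
    ext rv
    simp only [Set.mem_setOf_eq, Set.mem_iInter]
    rw [reduce_forall (fun p q' : ℕ × ℝ => max (rv.1 p.1 q'.1) |p.2 - q'.2|) rv.2 m n q]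
    refine forall_congr' fun s => ?_
    refine forall_congr' fun hs => ?_
    have hcard : empMeas rv.2 m ((fun i => (i, rv.2 i)) '' (s : Set ℕ)) =
        ((m : ℝ≥0∞))⁻¹ * (s.card : ℝ≥0∞) := by
      rw [empMeas_apply]
      congr 1
      have : ∀ j ∈ Finset.range m,
          (if ((j, rv.2 j) ∈ (fun i => (i, rv.2 i)) '' (s : Set ℕ)) then (1:ℝ≥0∞) else 0)
          = if j ∈ s then 1 else 0 := fun j _ => if_congr (mem_img_iff rv.2 s j) rfl rfl
      rw [Finset.sum_congr rfl this, Finset.sum_ite_mem, Finset.inter_eq_right.mpr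
        (Finset.mem_powerset.mp hs), Finset.sum_const, nsmul_eq_mul, mul_one]
    have henl : {y : ℕ × ℝ | ∃ x ∈ (fun i => (i, rv.2 i)) '' (s : Set ℕ),
        max (rv.1 x.1 y.1) |x.2 - y.2| < q} =
        {y : ℕ × ℝ | ∃ i ∈ s, max (rv.1 i y.1) |rv.2 i - y.2| < q} := by
      ext y
      simp [Set.mem_image]
    have henl2 : empMeas rv.2 n {y : ℕ × ℝ | ∃ x ∈ (fun i => (i, rv.2 i)) '' (s : Set ℕ),
        max (rv.1 x.1 y.1) |x.2 - y.2| < q} =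
        ((n : ℝ≥0∞))⁻¹ * ∑ j ∈ Finset.range n,
          (if (∃ i ∈ s, max (rv.1 i j) |rv.2 i - rv.2 j| < q) then 1 else 0) := by
      rw [henl, empMeas_apply]
      simp only [Set.mem_setOf_eq]
    rw [hcard, henl2]
  rw [hset]
  refine MeasurableSet.biInter (Finset.countable_toSet _) fun s _ => ?_
  refine measurableSet_le measurable_const ?_
  refine Measurable.add_const ?_ _
  refine Measurable.const_mul ?_ _
  refine Finset.measurable_sum _ fun j _ => ?_
  refine Measurable.ite ?_ measurable_const measurable_const
  have : {rv : (ℕ → ℕ → ℝ) × (ℕ → ℝ) | ∃ i ∈ s, max (rv.1 i j) |rv.2 i - rv.2 j| < q} =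
      ⋃ i ∈ s, {rv : (ℕ → ℕ → ℝ) × (ℕ → ℝ) | max (rv.1 i j) |rv.2 i - rv.2 j| < q} := by
    ext rv; simp only [Set.mem_iUnion, Set.mem_setOf_eq, exists_prop]
  rw [this]
  exact MeasurableSet.biUnion s.countable_toSet fun i _ =>
    measurableSet_lt ((hr_meas i j).max ((hv_meas i).sub (hv_meas j)).abs) measurable_const

lemma meas_pd_le (m n : ℕ) (c : ℝ) :
    MeasurableSet {rv : (ℕ → ℕ → ℝ) × (ℕ → ℝ) |
      prohorovDist (fun p q : ℕ × ℝ => max (rv.1 p.1 q.1) |p.2 - q.2|)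
        (empMeas rv.2 (m + 1)) (empMeas rv.2 (n + 1)) ≤ c} := by
  have hset : {rv : (ℕ → ℕ → ℝ) × (ℕ → ℝ) |
      prohorovDist (fun p q : ℕ × ℝ => max (rv.1 p.1 q.1) |p.2 - q.2|)
        (empMeas rv.2 (m + 1)) (empMeas rv.2 (n + 1)) ≤ c} =
      ⋂ (q : ℚ), ⋂ (_ : c < (q : ℝ)),
        ({rv : (ℕ → ℕ → ℝ) × (ℕ → ℝ) | 0 < (q : ℝ)} ∩
          ({rv : (ℕ → ℕ → ℝ) × (ℕ → ℝ) | ∀ F : Set (ℕ × ℝ),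
              empMeas rv.2 (m + 1) F ≤
                empMeas rv.2 (n + 1) {y | ∃ x ∈ F, max (rv.1 x.1 y.1) |x.2 - y.2| < (q : ℝ)}
                  + ENNReal.ofReal (q : ℝ)} ∩
           {rv : (ℕ → ℕ → ℝ) × (ℕ → ℝ) | ∀ F : Set (ℕ × ℝ),
              empMeas rv.2 (n + 1) F ≤
                empMeas rv.2 (m + 1) {y | ∃ x ∈ F, max (rv.1 x.1 y.1) |x.2 - y.2| < (q : ℝ)}
                  + ENNReal.ofReal (q : ℝ)})) := by
    ext rv
    simp only [Set.mem_setOf_eq, Set.mem_iInter, Set.mem_inter_iff]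
    rw [Stmt13Aux.prohorovDist_le_iff (empMeas_univ_le _ _) (empMeas_univ_le _ _)]
    exact Iff.rfl
  rw [hset]
  exact MeasurableSet.iInter fun q => MeasurableSet.iInter fun _ =>
    (MeasurableSet.const _).inter
      ((meas_one_side (m + 1) (n + 1) (q : ℝ)).inter (meas_one_side (n + 1) (m + 1) (q : ℝ)))


/-- The set `D̂*` of marked distance matrices `(r,v)` (with `r` a pseudometric on `ℕ` and
`v ≥ 0`) whose empirical measures `mⁿ = n⁻¹ ∑_{i<n} δ_{(i,v(i))}` converge weakly on the
completion of `(ℕ,r) × ℝ≥0` — equivalently, are Cauchy for the Prohorov metric associated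
with the distance `d((i,u),(j,u')) = max (r i j) |u−u'|` — is a Borel subset. -/
theorem stmt13 :
    MeasurableSet {rv : (ℕ → ℕ → ℝ) × (ℕ → ℝ) |
      ((∀ i, rv.1 i i = 0) ∧ (∀ i j, 0 ≤ rv.1 i j) ∧ (∀ i j, rv.1 i j = rv.1 j i) ∧
        (∀ i j k, rv.1 i k ≤ rv.1 i j + rv.1 j k) ∧ (∀ i, 0 ≤ rv.2 i)) ∧
      (∀ ε : ℝ, 0 < ε → ∃ N : ℕ, ∀ m ≥ N, ∀ n ≥ N,
        prohorovDist (fun p q : ℕ × ℝ => max (rv.1 p.1 q.1) |p.2 - q.2|)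
          (empMeas rv.2 (m + 1)) (empMeas rv.2 (n + 1)) ≤ ε)} := by
  have h1 : MeasurableSet {rv : (ℕ → ℕ → ℝ) × (ℕ → ℝ) | ∀ i, rv.1 i i = 0} := by
    have : {rv : (ℕ → ℕ → ℝ) × (ℕ → ℝ) | ∀ i, rv.1 i i = 0} =
        ⋂ i, {rv : (ℕ → ℕ → ℝ) × (ℕ → ℝ) | rv.1 i i = 0} := by ext; simp
    rw [this]
    exact MeasurableSet.iInter fun i => measurableSet_eq_fun (hr_meas i i) measurable_const
  have h2 : MeasurableSet {rv : (ℕ → ℕ → ℝ) × (ℕ → ℝ) | ∀ i j, 0 ≤ rv.1 i j} := by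
    have : {rv : (ℕ → ℕ → ℝ) × (ℕ → ℝ) | ∀ i j, 0 ≤ rv.1 i j} =
        ⋂ i, ⋂ j, {rv : (ℕ → ℕ → ℝ) × (ℕ → ℝ) | 0 ≤ rv.1 i j} := by ext; simp
    rw [this]
    exact MeasurableSet.iInter fun i => MeasurableSet.iInter fun j =>
      measurableSet_le measurable_const (hr_meas i j)
  have h3 : MeasurableSet {rv : (ℕ → ℕ → ℝ) × (ℕ → ℝ) | ∀ i j, rv.1 i j = rv.1 j i} := by
    have : {rv : (ℕ → ℕ → ℝ) × (ℕ → ℝ) | ∀ i j, rv.1 i j = rv.1 j i} =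
        ⋂ i, ⋂ j, {rv : (ℕ → ℕ → ℝ) × (ℕ → ℝ) | rv.1 i j = rv.1 j i} := by ext; simp
    rw [this]
    exact MeasurableSet.iInter fun i => MeasurableSet.iInter fun j =>
      measurableSet_eq_fun (hr_meas i j) (hr_meas j i)
  have h4 : MeasurableSet {rv : (ℕ → ℕ → ℝ) × (ℕ → ℝ) |
      ∀ i j k, rv.1 i k ≤ rv.1 i j + rv.1 j k} := by
    have : {rv : (ℕ → ℕ → ℝ) × (ℕ → ℝ) | ∀ i j k, rv.1 i k ≤ rv.1 i j + rv.1 j k} =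
        ⋂ i, ⋂ j, ⋂ k, {rv : (ℕ → ℕ → ℝ) × (ℕ → ℝ) | rv.1 i k ≤ rv.1 i j + rv.1 j k} := by
      ext; simp
    rw [this]
    exact MeasurableSet.iInter fun i => MeasurableSet.iInter fun j => MeasurableSet.iInter fun k =>
      measurableSet_le (hr_meas i k) ((hr_meas i j).add (hr_meas j k))
  have h5 : MeasurableSet {rv : (ℕ → ℕ → ℝ) × (ℕ → ℝ) | ∀ i, 0 ≤ rv.2 i} := by
    have : {rv : (ℕ → ℕ → ℝ) × (ℕ → ℝ) | ∀ i, 0 ≤ rv.2 i} =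
        ⋂ i, {rv : (ℕ → ℕ → ℝ) × (ℕ → ℝ) | 0 ≤ rv.2 i} := by ext; simp
    rw [this]
    exact MeasurableSet.iInter fun i => measurableSet_le measurable_const (hv_meas i)
  have hB : MeasurableSet {rv : (ℕ → ℕ → ℝ) × (ℕ → ℝ) |
      ∀ ε : ℝ, 0 < ε → ∃ N : ℕ, ∀ m ≥ N, ∀ n ≥ N,
        prohorovDist (fun p q : ℕ × ℝ => max (rv.1 p.1 q.1) |p.2 - q.2|)
          (empMeas rv.2 (m + 1)) (empMeas rv.2 (n + 1)) ≤ ε} := by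
    have hset : {rv : (ℕ → ℕ → ℝ) × (ℕ → ℝ) |
        ∀ ε : ℝ, 0 < ε → ∃ N : ℕ, ∀ m ≥ N, ∀ n ≥ N,
          prohorovDist (fun p q : ℕ × ℝ => max (rv.1 p.1 q.1) |p.2 - q.2|)
            (empMeas rv.2 (m + 1)) (empMeas rv.2 (n + 1)) ≤ ε} =
        ⋂ (k : ℕ), ⋃ (N : ℕ), ⋂ (m : ℕ), ⋂ (_ : N ≤ m), ⋂ (n : ℕ), ⋂ (_ : N ≤ n),
          {rv : (ℕ → ℕ → ℝ) × (ℕ → ℝ) |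
            prohorovDist (fun p q : ℕ × ℝ => max (rv.1 p.1 q.1) |p.2 - q.2|)
              (empMeas rv.2 (m + 1)) (empMeas rv.2 (n + 1)) ≤ 1 / ((k : ℝ) + 1)} := by
      ext rv
      simp only [Set.mem_setOf_eq, Set.mem_iInter, Set.mem_iUnion]
      constructor
      · intro h k
        obtain ⟨N, hN⟩ := h (1 / ((k : ℝ) + 1)) (by positivity)
        exact ⟨N, fun m hm n hn => hN m hm n hn⟩
      · intro h ε hε
        obtain ⟨k, hk⟩ := exists_nat_one_div_lt hε
        obtain ⟨N, hN⟩ := h k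
        exact ⟨N, fun m hm n hn => (hN m hm n hn).trans hk.le⟩
    rw [hset]
    exact MeasurableSet.iInter fun k => MeasurableSet.iUnion fun N =>
      MeasurableSet.iInter fun m => MeasurableSet.iInter fun _ =>
        MeasurableSet.iInter fun n => MeasurableSet.iInter fun _ =>
          meas_pd_le m n _
  simp only [Set.setOf_and]
  exact (h1.inter (h2.inter (h3.inter (h4.inter h5)))).inter hB
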